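/- For a ∈ GL(n,ℤ) let N(a) = {x ∈ ℤⁿ \ {0} : (0 < x ⟺ xa < 0)}, where < is the standard lexicographic order on ℤⁿ. Then for all a, b ∈ GL(n,ℤ), N(ab) = N(a) △ N(b)a⁻¹, the symmetric difference of N(a) and the image of N(b) under right multiplication by a⁻¹. -/
import Mathlib


/-- `x > 0` in the standard lexicographic order on `ℤⁿ`. -/
def lexPos {n : ℕ} (x : Fin n → ℤ) : Prop :=
  ∃ i, (∀ j, j < i → x j = 0) ∧ 0 < x i

/-- `N(a) = {x ∈ ℤⁿ \ {0} : 0 < x ⟺ xa < 0}`. -/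
def Nset {n : ℕ} (a : Matrix.GeneralLinearGroup (Fin n) ℤ) : Set (Fin n → ℤ) :=
  {x | x ≠ 0 ∧ (lexPos x ↔ lexPos (-(Matrix.vecMul x (a : Matrix (Fin n) (Fin n) ℤ))))}

lemma lexPos_neg_iff {n : ℕ} {v : Fin n → ℤ} (hv : v ≠ 0) : lexPos (-v) ↔ ¬ lexPos v := by
  constructor
  · rintro ⟨i, hi, hip⟩ ⟨j, hj, hjp⟩
    rcases lt_trichotomy i j with h | h | h
    · have := hj i h; simp only [Pi.neg_apply] at hip; omega
    · subst h; simp only [Pi.neg_apply] at hip; omega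
    · have := hi j h; simp only [Pi.neg_apply] at this; omega
  · intro h
    have hne : (Finset.univ.filter (fun i => v i ≠ 0)).Nonempty := by
      by_contra hc
      rw [Finset.not_nonempty_iff_eq_empty, Finset.filter_eq_empty_iff] at hc
      exact hv (funext fun i => by have := hc (Finset.mem_univ i); simpa using this)
    set i := (Finset.univ.filter (fun i => v i ≠ 0)).min' hne with hidef
    have hmem := Finset.min'_mem _ hne
    have hiv : v i ≠ 0 := by simpa using hmem
    have hmin : ∀ j, j < i → v j = 0 := by
      intro j hj
      by_contra hjv
      have : i ≤ j := Finset.min'_le _ j (by simpa using hjv)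
      omega
    rcases lt_or_gt_of_ne hiv with hlt | hgt
    · exact ⟨i, fun j hj => by simp [hmin j hj], by simpa using hlt⟩
    · exact absurd ⟨i, hmin, hgt⟩ h

lemma vecMul_ne_zero {n : ℕ} (a : Matrix.GeneralLinearGroup (Fin n) ℤ)
    {x : Fin n → ℤ} (hx : x ≠ 0) :
    Matrix.vecMul x (a : Matrix (Fin n) (Fin n) ℤ) ≠ 0 := by
  intro h
  apply hx
  have : Matrix.vecMul (Matrix.vecMul x (a : Matrix (Fin n) (Fin n) ℤ))
      ((a⁻¹ : Matrix.GeneralLinearGroup (Fin n) ℤ) : Matrix (Fin n) (Fin n) ℤ) = x := by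
    rw [Matrix.vecMul_vecMul, ← Units.val_mul, mul_inv_cancel, Units.val_one, Matrix.vecMul_one]
  rw [h, Matrix.zero_vecMul] at this
  exact this.symm

/-- `N(ab) = N(a) △ N(b)·a⁻¹`. -/
theorem stmt6 {n : ℕ} (a b : Matrix.GeneralLinearGroup (Fin n) ℤ) :
    Nset (a * b) =
      symmDiff (Nset a)
        ((fun x => Matrix.vecMul x ((a⁻¹ : Matrix.GeneralLinearGroup (Fin n) ℤ) :
            Matrix (Fin n) (Fin n) ℤ)) '' Nset b) := by
  ext x
  rw [Set.mem_symmDiff]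
  by_cases hx : x = 0
  · subst hx
    simp only [Nset, Set.mem_setOf_eq, ne_eq, not_true_eq_false, false_and, Set.mem_image,
      false_iff, false_and, not_false_eq_true, and_true, false_or]
    rintro ⟨w, ⟨hw, -⟩, hw0⟩
    exact vecMul_ne_zero a⁻¹ hw hw0
  · -- x ≠ 0 case
    set y := Matrix.vecMul x (a : Matrix (Fin n) (Fin n) ℤ) with hy
    have hy0 : y ≠ 0 := vecMul_ne_zero a hx
    set z := Matrix.vecMul y (b : Matrix (Fin n) (Fin n) ℤ) with hz
    have hz0 : z ≠ 0 := vecMul_ne_zero b hy0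
    have hab : Matrix.vecMul x ((a * b : Matrix.GeneralLinearGroup (Fin n) ℤ) :
        Matrix (Fin n) (Fin n) ℤ) = z := by
      rw [Units.val_mul, ← Matrix.vecMul_vecMul]
    have himg : x ∈ ((fun w => Matrix.vecMul w ((a⁻¹ : Matrix.GeneralLinearGroup (Fin n) ℤ) :
        Matrix (Fin n) (Fin n) ℤ)) '' Nset b) ↔ y ∈ Nset b := by
      constructor
      · rintro ⟨w, hw, hwx⟩
        have hwy : w = y := by
          have : Matrix.vecMul w ((a⁻¹ : Matrix.GeneralLinearGroup (Fin n) ℤ) :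
              Matrix (Fin n) (Fin n) ℤ) = x := hwx
          rw [hy, ← this, Matrix.vecMul_vecMul, ← Units.val_mul, inv_mul_cancel, Units.val_one,
            Matrix.vecMul_one]
        rwa [← hwy]
      · intro hyb
        refine ⟨y, hyb, ?_⟩
        show Matrix.vecMul y _ = x
        rw [hy, Matrix.vecMul_vecMul, ← Units.val_mul, mul_inv_cancel, Units.val_one,
          Matrix.vecMul_one]
    rw [himg]
    simp only [Nset, Set.mem_setOf_eq, hab, ← hy, ← hz]
    rw [lexPos_neg_iff hz0, lexPos_neg_iff hy0]
    by_cases hP : lexPos x <;> by_cases hQ : lexPos y <;> by_cases hR : lexPos z <;>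
      simp [hP, hQ, hR, hx, hy0, hz0]
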